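/- Let (A_p, A_s, <) be a regular bipartite poset (between consecutive maximum antichains), and let a maximum antichain A_t be inserted between them such that (A_p, A_t, <) and (A_t, A_s, <) are both regular bipartite posets and the comparability between A_p and A_s factors through A_t. Then for every connected component M of the comparability graph of (A_p, A_t, <) (or of (A_t, A_s, <)) there is a unique connected component N of (A_p, A_s, <) with Int(M) ⊊ Int(N). -/

import Mathlib

/-- Adjacency in the bipartite comparability graph between antichains `A` and `B`. -/
def bipAdj {α : Type*} [PartialOrder α] (A B : Finset α) (a b : α) : Prop :=
  (a ∈ A ∧ b ∈ B ∧ a < b) ∨ (b ∈ A ∧ a ∈ B ∧ b < a)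

/-- A node of the bipartite poset `(A, B, <)`: a connected component of its
comparability graph. -/
def IsNodeOf {α : Type*} [PartialOrder α] [DecidableEq α] (A B : Finset α)
    (S : Set α) : Prop :=
  ∃ v ∈ A ∪ B, S = {u | Relation.ReflTransGen (bipAdj A B) v u}

/-- The interval of a node `S` of `(A, B, <)`. -/
def nodeIntOf {α : Type*} [PartialOrder α] (A B : Finset α) (S : Set α) : Set α :=
  {p | (∃ x ∈ S ∩ (A : Set α), x ≤ p) ∧ ∃ y ∈ S ∩ (B : Set α), p ≤ y}

/-- A bipartite poset `(X, Y, <)` is regular if every comparability edge `x < y`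
extends to a perfect matching between `X` and `Y`. -/
def IsRegularBipartite {α : Type*} [PartialOrder α] (X Y : Finset α) : Prop :=
  ∀ x, ∀ hx : x ∈ X, ∀ y, ∀ hy : y ∈ Y, x < y →
    ∃ f : {a // a ∈ X} → {b // b ∈ Y},
      Function.Bijective f ∧ (∀ a : {a // a ∈ X}, (a : α) < (f a : α)) ∧ f ⟨x, hx⟩ = ⟨y, hy⟩

section Aux

variable {α : Type*} [PartialOrder α]

lemma bipAdj_symm {A B : Finset α} : Symmetric (bipAdj A B) :=
  fun _ _ h => h.symm

/-- `a` is an anchor (in `Ap`) of a vertex `u` of the `(Ap, At)` graph. -/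
def AnchorLow (Ap At : Finset α) (u a : α) : Prop :=
  a ∈ Ap ∧ (a = u ∨ (u ∈ At ∧ a < u))

/-- `c` is an anchor (in `As`) of a vertex `u` of the `(At, As)` graph. -/
def AnchorHigh (At As : Finset α) (u c : α) : Prop :=
  c ∈ As ∧ (c = u ∨ (u ∈ At ∧ u < c))

lemma anchorLow_exists {Ap At : Finset α}
    (htp : ∀ b ∈ At, ∃ a ∈ Ap, a < b) {u : α} (hu : u ∈ Ap ∨ u ∈ At) :
    ∃ a, AnchorLow Ap At u a := by
  rcases hu with h | h
  · exact ⟨u, h, Or.inl rfl⟩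
  · obtain ⟨a, ha, hlt⟩ := htp u h
    exact ⟨a, ha, Or.inr ⟨h, hlt⟩⟩

lemma anchorHigh_exists {At As : Finset α}
    (hts : ∀ b ∈ At, ∃ c ∈ As, b < c) {u : α} (hu : u ∈ At ∨ u ∈ As) :
    ∃ c, AnchorHigh At As u c := by
  rcases hu with h | h
  · obtain ⟨c, hc, hlt⟩ := hts u h
    exact ⟨c, hc, Or.inr ⟨h, hlt⟩⟩
  · exact ⟨u, h, Or.inl rfl⟩

/-- Two anchors of the same vertex are connected in the `(Ap, As)` graph. -/
lemma anchorLow_conn {Ap At As : Finset α}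
    (hd1 : Disjoint Ap At) (hts : ∀ b ∈ At, ∃ c ∈ As, b < c)
    {u a a' : α} (h : AnchorLow Ap At u a) (h' : AnchorLow Ap At u a') :
    Relation.ReflTransGen (bipAdj Ap As) a a' := by
  obtain ⟨ha, h⟩ := h
  obtain ⟨ha', h'⟩ := h'
  rcases h with rfl | ⟨hu, hlt⟩
  · rcases h' with rfl | ⟨hu, hlt'⟩
    · exact Relation.ReflTransGen.refl
    · exact absurd (Finset.disjoint_left.1 hd1 ha) (fun H => H hu)
  · rcases h' with rfl | ⟨-, hlt'⟩
    · exact absurd (Finset.disjoint_left.1 hd1 ha') (fun H => H hu)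
    · obtain ⟨c, hc, hlt2⟩ := hts u hu
      exact Relation.ReflTransGen.tail
        (Relation.ReflTransGen.single (Or.inl ⟨ha, hc, hlt.trans hlt2⟩))
        (Or.inr ⟨ha', hc, hlt'.trans hlt2⟩)

lemma anchorHigh_conn {Ap At As : Finset α}
    (hd2 : Disjoint At As) (htp : ∀ b ∈ At, ∃ a ∈ Ap, a < b)
    {u c c' : α} (h : AnchorHigh At As u c) (h' : AnchorHigh At As u c') :
    Relation.ReflTransGen (bipAdj Ap As) c c' := by
  obtain ⟨hc, h⟩ := h
  obtain ⟨hc', h'⟩ := h'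
  rcases h with rfl | ⟨hu, hlt⟩
  · rcases h' with rfl | ⟨hu, hlt'⟩
    · exact Relation.ReflTransGen.refl
    · exact absurd (Finset.disjoint_left.1 hd2 hu) (fun H => H hc)
  · rcases h' with rfl | ⟨-, hlt'⟩
    · exact absurd (Finset.disjoint_left.1 hd2 hu) (fun H => H hc')
    · obtain ⟨a, ha, hlt2⟩ := htp u hu
      exact Relation.ReflTransGen.tail
        (Relation.ReflTransGen.single (Or.inr ⟨ha, hc, hlt2.trans hlt⟩))
        (Or.inl ⟨ha, hc', hlt2.trans hlt'⟩)

/-- Anchors of adjacent vertices are connected in the `(Ap, As)` graph. -/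
lemma anchorLow_step {Ap At As : Finset α}
    (hd1 : Disjoint Ap At)
    (hAp : IsAntichain (· ≤ ·) (Ap : Set α))
    (hts : ∀ b ∈ At, ∃ c ∈ As, b < c)
    {u u' a a' : α} (hadj : bipAdj Ap At u u')
    (h : AnchorLow Ap At u a) (h' : AnchorLow Ap At u' a') :
    Relation.ReflTransGen (bipAdj Ap As) a a' := by
  obtain ⟨ha, h⟩ := h
  obtain ⟨ha', h'⟩ := h'
  rcases hadj with ⟨hu, hu', hlt⟩ | ⟨hu', hu, hlt⟩
  · -- u ∈ Ap, u' ∈ At, u < u'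
    have hau : a = u := by
      rcases h with rfl | ⟨huAt, _⟩
      · rfl
      · exact absurd (Finset.disjoint_left.1 hd1 hu) (fun H => H huAt)
    subst hau
    have h'lt : a' < u' := by
      rcases h' with rfl | ⟨_, hlt'⟩
      · exact absurd (Finset.disjoint_left.1 hd1 ha') (fun H => H hu')
      · exact hlt'
    obtain ⟨c, hc, hlt2⟩ := hts u' hu'
    exact Relation.ReflTransGen.tail
      (Relation.ReflTransGen.single (Or.inl ⟨ha, hc, hlt.trans hlt2⟩))
      (Or.inr ⟨ha', hc, h'lt.trans hlt2⟩)
  · -- u' ∈ Ap, u ∈ At, u' < u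
    have hau' : a' = u' := by
      rcases h' with rfl | ⟨huAt, _⟩
      · rfl
      · exact absurd (Finset.disjoint_left.1 hd1 hu') (fun H => H huAt)
    subst hau'
    have hlt' : a < u := by
      rcases h with rfl | ⟨_, hlt'⟩
      · exact absurd (Finset.disjoint_left.1 hd1 ha) (fun H => H hu)
      · exact hlt'
    obtain ⟨c, hc, hlt2⟩ := hts u hu
    exact Relation.ReflTransGen.tail
      (Relation.ReflTransGen.single (Or.inl ⟨ha, hc, hlt'.trans hlt2⟩))
      (Or.inr ⟨ha', hc, hlt.trans hlt2⟩)

lemma anchorHigh_step {Ap At As : Finset α}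
    (hd2 : Disjoint At As)
    (htp : ∀ b ∈ At, ∃ a ∈ Ap, a < b)
    {u u' c c' : α} (hadj : bipAdj At As u u')
    (h : AnchorHigh At As u c) (h' : AnchorHigh At As u' c') :
    Relation.ReflTransGen (bipAdj Ap As) c c' := by
  obtain ⟨hc, h⟩ := h
  obtain ⟨hc', h'⟩ := h'
  rcases hadj with ⟨hu, hu', hlt⟩ | ⟨hu', hu, hlt⟩
  · -- u ∈ At, u' ∈ As, u < u'
    have hcu' : c' = u' := by
      rcases h' with rfl | ⟨huAt, _⟩
      · rfl
      · exact absurd (Finset.disjoint_left.1 hd2 huAt) (fun H => H hu')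
    subst hcu'
    have hltc : u < c := by
      rcases h with rfl | ⟨_, hlt'⟩
      · exact absurd (Finset.disjoint_left.1 hd2 hu) (fun H => H hc)
      · exact hlt'
    obtain ⟨a, ha, hlt2⟩ := htp u hu
    exact Relation.ReflTransGen.tail
      (Relation.ReflTransGen.single (Or.inr ⟨ha, hc, hlt2.trans hltc⟩))
      (Or.inl ⟨ha, hc', hlt2.trans hlt⟩)
  · -- u' ∈ At, u ∈ As, u' < u
    have hcu : c = u := by
      rcases h with rfl | ⟨huAt, _⟩
      · rfl
      · exact absurd (Finset.disjoint_left.1 hd2 huAt) (fun H => H hu)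
    subst hcu
    have hltc' : u' < c' := by
      rcases h' with rfl | ⟨_, hlt'⟩
      · exact absurd (Finset.disjoint_left.1 hd2 hu') (fun H => H hc')
      · exact hlt'
    obtain ⟨a, ha, hlt2⟩ := htp u' hu'
    exact Relation.ReflTransGen.tail
      (Relation.ReflTransGen.single (Or.inr ⟨ha, hc, hlt2.trans hlt⟩))
      (Or.inl ⟨ha, hc', hlt2.trans hltc'⟩)

lemma bipAdj_mem_left {A B : Finset α} {u u' : α} (h : bipAdj A B u u') :
    u ∈ A ∨ u ∈ B := by
  rcases h with ⟨h1, _, _⟩ | ⟨_, h2, _⟩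
  · exact Or.inl h1
  · exact Or.inr h2

/-- Components containing a common point coincide. -/
lemma comp_eq_of_mem {r : α → α → Prop} (hsymm : Symmetric r) {v w : α}
    (h : Relation.ReflTransGen r v w) :
    {u | Relation.ReflTransGen r v u} = {u | Relation.ReflTransGen r w u} := by
  ext u
  constructor
  · haveI : Std.Symm r := ⟨hsymm⟩
    exact fun h' => ((Relation.ReflTransGen.stdSymm).symm _ _ h).trans h'
  · exact fun h' => h.trans h'

end Aux

/-- Proposition 2: when a maximum antichain `A_t` is inserted between consecutive
maximum antichains `A_p ⊑ A_s` (all bipartite posets regular, comparabilities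
between `A_p` and `A_s` factoring through `A_t`), every node of `(A_p, A_t, <)`
or of `(A_t, A_s, <)` has a unique node `N` of `(A_p, A_s, <)` with
`Int(M) ⊊ Int(N)`. -/
theorem stmt17 {α : Type*} [PartialOrder α] [Fintype α] [DecidableEq α] (w : ℕ)
    (hwidth : ∀ S : Finset α, IsAntichain (· ≤ ·) (S : Set α) → S.card ≤ w)
    (Ap At As : Finset α)
    (hAp : IsAntichain (· ≤ ·) (Ap : Set α)) (hAt : IsAntichain (· ≤ ·) (At : Set α))
    (hAs : IsAntichain (· ≤ ·) (As : Set α))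
    (hcp : Ap.card = w) (hct : At.card = w) (hcs : As.card = w)
    (hd1 : Disjoint Ap At) (hd2 : Disjoint At As) (hd3 : Disjoint Ap As)
    (hpt : ∀ a ∈ Ap, ∃ b ∈ At, a < b) (htp : ∀ b ∈ At, ∃ a ∈ Ap, a < b)
    (hts : ∀ b ∈ At, ∃ c ∈ As, b < c) (hst : ∀ c ∈ As, ∃ b ∈ At, b < c)
    (hreg1 : IsRegularBipartite Ap At) (hreg2 : IsRegularBipartite At As)
    (hreg3 : IsRegularBipartite Ap As)
    (hfactor : ∀ a ∈ Ap, ∀ c ∈ As, a < c → ∃ b ∈ At, a < b ∧ b < c) :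
    (∀ S : Set α, IsNodeOf Ap At S →
      ∃! N : Set α, IsNodeOf Ap As N ∧ nodeIntOf Ap At S ⊂ nodeIntOf Ap As N) ∧
    (∀ S : Set α, IsNodeOf At As S →
      ∃! N : Set α, IsNodeOf Ap As N ∧ nodeIntOf At As S ⊂ nodeIntOf Ap As N) := by
  constructor
  · -- Part 1: nodes of (Ap, At)
    rintro S ⟨v, hv, rfl⟩
    have hv' : v ∈ Ap ∨ v ∈ At := Finset.mem_union.1 hv
    obtain ⟨a₀, ha₀⟩ := anchorLow_exists htp hv'
    -- every anchor of a vertex in the component is connected to a₀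
    have key : ∀ u, Relation.ReflTransGen (bipAdj Ap At) v u →
        ∀ a, AnchorLow Ap At u a → Relation.ReflTransGen (bipAdj Ap As) a₀ a := by
      intro u hu
      induction hu with
      | refl => exact fun a ha => anchorLow_conn hd1 hts ha₀ ha
      | tail _ hadj ih =>
        intro a ha
        obtain ⟨a1, ha1⟩ := anchorLow_exists htp (bipAdj_mem_left hadj)
        exact (ih a1 ha1).trans (anchorLow_step hd1 hAp hts hadj ha1 ha)
    set S : Set α := {u | Relation.ReflTransGen (bipAdj Ap At) v u} with hS
    set N : Set α := {u | Relation.ReflTransGen (bipAdj Ap As) a₀ u} with hN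
    have ha₀Ap : a₀ ∈ Ap := ha₀.1
    have ha₀S : a₀ ∈ S := by
      rcases ha₀.2 with rfl | ⟨hvt, hlt⟩
      · exact Relation.ReflTransGen.refl
      · exact Relation.ReflTransGen.single (Or.inr ⟨ha₀Ap, hvt, hlt⟩)
    -- a₀ has an At element above it inside S
    have hb₀ : ∃ b ∈ S, b ∈ At ∧ a₀ < b := by
      rcases ha₀.2 with rfl | ⟨hvt, hlt⟩
      · obtain ⟨b, hb, hlt⟩ := hpt a₀ ha₀Ap
        exact ⟨b, Relation.ReflTransGen.single (Or.inl ⟨ha₀Ap, hb, hlt⟩), hb, hlt⟩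
      · exact ⟨v, Relation.ReflTransGen.refl, hvt, hlt⟩
    obtain ⟨b₀, hb₀S, hb₀At, hb₀lt⟩ := hb₀
    -- membership in N of Ap-elements of S, and As-lifts of At-elements of S
    have hapN : ∀ x, x ∈ S → x ∈ Ap → x ∈ N := fun x hx hxAp =>
      key x hx x ⟨hxAp, Or.inl rfl⟩
    have hatN : ∀ y, y ∈ S → y ∈ At → ∃ c ∈ As, y < c ∧ c ∈ N := by
      intro y hy hyAt
      obtain ⟨a, haAp, halt⟩ := htp y hyAt
      obtain ⟨c, hcAs, hclt⟩ := hts y hyAt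
      have haN : a ∈ N := key y hy a ⟨haAp, Or.inr ⟨hyAt, halt⟩⟩
      exact ⟨c, hcAs, hclt,
        haN.tail (Or.inl ⟨haAp, hcAs, halt.trans hclt⟩)⟩
    have hsub : nodeIntOf Ap At S ⊆ nodeIntOf Ap As N := by
      rintro p ⟨⟨x, ⟨hxS, hxAp⟩, hxp⟩, ⟨y, ⟨hyS, hyAt⟩, hpy⟩⟩
      obtain ⟨c, hcAs, hclt, hcN⟩ := hatN y hyS hyAt
      exact ⟨⟨x, ⟨hapN x hxS hxAp, hxAp⟩, hxp⟩,
        ⟨c, ⟨hcN, hcAs⟩, hpy.trans hclt.le⟩⟩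
    -- strictness: an As element in Int(N) but not in Int(S)
    obtain ⟨c₀, hc₀As, hc₀lt, hc₀N⟩ := hatN b₀ hb₀S hb₀At
    have hc₀Int : c₀ ∈ nodeIntOf Ap As N := by
      refine ⟨⟨a₀, ⟨Relation.ReflTransGen.refl, ha₀Ap⟩, (hb₀lt.trans hc₀lt).le⟩,
        ⟨c₀, ⟨hc₀N, hc₀As⟩, le_refl _⟩⟩
    have hc₀nInt : c₀ ∉ nodeIntOf Ap At S := by
      rintro ⟨-, ⟨y, ⟨hyS, hyAt⟩, hcy⟩⟩
      rcases eq_or_lt_of_le hcy with rfl | hlt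
      · exact Finset.disjoint_left.1 hd2 hyAt hc₀As
      · obtain ⟨b, hbAt, hblt⟩ := hst c₀ hc₀As
        exact hAt hbAt hyAt (fun h => absurd (h ▸ hblt) (lt_asymm hlt))
          (hblt.trans hlt).le
    refine ⟨N, ⟨⟨a₀, Finset.mem_union_left _ ha₀Ap, rfl⟩,
      hsub, fun hsub' => hc₀nInt (hsub' hc₀Int)⟩, ?_⟩
    -- uniqueness
    rintro N' ⟨⟨v', hv', rfl⟩, hsub', -⟩
    have ha₀Int : a₀ ∈ nodeIntOf Ap At S :=
      ⟨⟨a₀, ⟨ha₀S, ha₀Ap⟩, le_refl _⟩, ⟨b₀, ⟨hb₀S, hb₀At⟩, hb₀lt.le⟩⟩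
    obtain ⟨⟨x, ⟨hxN', hxAp⟩, hxle⟩, -⟩ := hsub' ha₀Int
    have : x = a₀ := by
      rcases eq_or_lt_of_le hxle with h | h
      · exact h
      · exact absurd hxle (hAp hxAp ha₀Ap (fun H => absurd H (ne_of_lt h)))
    subst this
    exact comp_eq_of_mem bipAdj_symm hxN'
  · -- Part 2: nodes of (At, As)
    rintro S ⟨v, hv, rfl⟩
    have hv' : v ∈ At ∨ v ∈ As := Finset.mem_union.1 hv
    obtain ⟨c₀, hc₀⟩ := anchorHigh_exists hts hv'
    have key : ∀ u, Relation.ReflTransGen (bipAdj At As) v u →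
        ∀ c, AnchorHigh At As u c → Relation.ReflTransGen (bipAdj Ap As) c₀ c := by
      intro u hu
      induction hu with
      | refl => exact fun c hc => anchorHigh_conn hd2 htp hc₀ hc
      | tail _ hadj ih =>
        intro c hc
        obtain ⟨c1, hc1⟩ := anchorHigh_exists hts (bipAdj_mem_left hadj)
        exact (ih c1 hc1).trans (anchorHigh_step hd2 htp hadj hc1 hc)
    set S : Set α := {u | Relation.ReflTransGen (bipAdj At As) v u} with hS
    set N : Set α := {u | Relation.ReflTransGen (bipAdj Ap As) c₀ u} with hN
    have hc₀As : c₀ ∈ As := hc₀.1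
    have hc₀S : c₀ ∈ S := by
      rcases hc₀.2 with rfl | ⟨hvt, hlt⟩
      · exact Relation.ReflTransGen.refl
      · exact Relation.ReflTransGen.single (Or.inl ⟨hvt, hc₀As, hlt⟩)
    have hb₀ : ∃ b ∈ S, b ∈ At ∧ b < c₀ := by
      rcases hc₀.2 with rfl | ⟨hvt, hlt⟩
      · obtain ⟨b, hb, hlt⟩ := hst c₀ hc₀As
        exact ⟨b, Relation.ReflTransGen.single (Or.inr ⟨hb, hc₀As, hlt⟩), hb, hlt⟩
      · exact ⟨v, Relation.ReflTransGen.refl, hvt, hlt⟩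
    obtain ⟨b₀, hb₀S, hb₀At, hb₀lt⟩ := hb₀
    have hasN : ∀ y, y ∈ S → y ∈ As → y ∈ N := fun y hy hyAs =>
      key y hy y ⟨hyAs, Or.inl rfl⟩
    have hatN : ∀ x, x ∈ S → x ∈ At → ∃ a ∈ Ap, a < x ∧ a ∈ N := by
      intro x hx hxAt
      obtain ⟨c, hcAs, hclt⟩ := hts x hxAt
      obtain ⟨a, haAp, halt⟩ := htp x hxAt
      have hcN : c ∈ N := key x hx c ⟨hcAs, Or.inr ⟨hxAt, hclt⟩⟩
      exact ⟨a, haAp, halt,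
        hcN.tail (Or.inr ⟨haAp, hcAs, halt.trans hclt⟩)⟩
    have hsub : nodeIntOf At As S ⊆ nodeIntOf Ap As N := by
      rintro p ⟨⟨x, ⟨hxS, hxAt⟩, hxp⟩, ⟨y, ⟨hyS, hyAs⟩, hpy⟩⟩
      obtain ⟨a, haAp, halt, haN⟩ := hatN x hxS hxAt
      exact ⟨⟨a, ⟨haN, haAp⟩, (halt.trans_le hxp).le⟩,
        ⟨y, ⟨hasN y hyS hyAs, hyAs⟩, hpy⟩⟩
    obtain ⟨a₀, ha₀Ap, ha₀lt, ha₀N⟩ := hatN b₀ hb₀S hb₀At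
    have ha₀Int : a₀ ∈ nodeIntOf Ap As N :=
      ⟨⟨a₀, ⟨ha₀N, ha₀Ap⟩, le_refl _⟩,
        ⟨c₀, ⟨Relation.ReflTransGen.refl, hc₀As⟩, (ha₀lt.trans hb₀lt).le⟩⟩
    have ha₀nInt : a₀ ∉ nodeIntOf At As S := by
      rintro ⟨⟨x, ⟨hxS, hxAt⟩, hxa⟩, -⟩
      rcases eq_or_lt_of_le hxa with rfl | hlt
      · exact Finset.disjoint_left.1 hd1 ha₀Ap hxAt
      · obtain ⟨a, haAp, halt⟩ := htp x hxAt
        exact hAp haAp ha₀Ap (fun h => absurd (h ▸ (halt.trans hlt)) (lt_irrefl _))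
          (halt.trans hlt).le
    refine ⟨N, ⟨⟨c₀, Finset.mem_union_right _ hc₀As, rfl⟩,
      hsub, fun hsub' => ha₀nInt (hsub' ha₀Int)⟩, ?_⟩
    rintro N' ⟨⟨v', hv', rfl⟩, hsub', -⟩
    have hc₀Int : c₀ ∈ nodeIntOf At As S :=
      ⟨⟨b₀, ⟨hb₀S, hb₀At⟩, hb₀lt.le⟩, ⟨c₀, ⟨hc₀S, hc₀As⟩, le_refl _⟩⟩
    obtain ⟨-, ⟨y, ⟨hyN', hyAs⟩, hyle⟩⟩ := hsub' hc₀Int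
    have : y = c₀ := by
      rcases eq_or_lt_of_le hyle with h | h
      · exact h.symm
      · exact absurd hyle (fun H => hAs hc₀As hyAs (ne_of_lt h) H)
    subst this
    exact comp_eq_of_mem bipAdj_symm hyN'
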